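/- For any nonempty finite set S = {a₁, …, a_m} of positive integers with gcd g and maximum H, there exist integers c₁, …, c_m with |cᵢ| ≤ max{H/(2g), 1} for all i and Σᵢ cᵢ·aᵢ = g. -/

import Mathlib

private def lgcd (l : List ℕ) : ℕ := l.foldr Nat.gcd 0

private lemma lgcd_dvd {l : List ℕ} {x : ℕ} (hx : x ∈ l) : lgcd l ∣ x := by
  induction l with
  | nil => simp at hx
  | cons a t ih =>
    rcases List.mem_cons.1 hx with h | h
    · subst h; exact Nat.gcd_dvd_left _ _
    · exact (Nat.gcd_dvd_right a (lgcd t)).trans (ih h)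

private lemma dvd_lgcd {l : List ℕ} {e : ℕ} (h : ∀ x ∈ l, e ∣ x) : e ∣ lgcd l := by
  induction l with
  | nil => simp [lgcd]
  | cons a t ih =>
    exact Nat.dvd_gcd (h a (by simp)) (ih fun x hx => h x (List.mem_cons_of_mem _ hx))



/-- Nearest solution of the congruence `m - c*a ≡ 0 [d']`. -/
private lemma near_mult (a d' : ℕ) (ha : 0 < a) (hd' : 0 < d') (m : ℤ)
    (hdvd : ((Nat.gcd a d' : ℕ) : ℤ) ∣ m) :
    ∃ v c : ℤ, m - c * (a : ℤ) = v ∧ ((d' : ℤ) ∣ v) ∧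
      2 * |v| * (Nat.gcd a d' : ℤ) ≤ (a : ℤ) * (d' : ℤ) := by
  set d : ℕ := Nat.gcd a d' with hd
  have hd0 : 0 < d := Nat.gcd_pos_of_pos_left _ ha
  obtain ⟨m₁, hm₁⟩ := hdvd
  have hbez : (d : ℤ) = a * Nat.gcdA a d' + d' * Nat.gcdB a d' := Nat.gcd_eq_gcd_ab a d'
  set c₀ : ℤ := Nat.gcdA a d' * m₁ with hc₀
  set v₀ : ℤ := m - c₀ * a with hv₀def
  have hdvdv₀ : (d' : ℤ) ∣ v₀ := by
    refine ⟨m₁ * Nat.gcdB a d', ?_⟩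
    rw [hv₀def, hm₁, hc₀, hbez]; ring
  obtain ⟨r, hr⟩ : d ∣ d' := Nat.gcd_dvd_right a d'
  obtain ⟨q, hq⟩ : d ∣ a := Nat.gcd_dvd_left a d'
  set M : ℤ := (a : ℤ) * r with hM
  have hr1 : 1 ≤ r := by
    rcases Nat.eq_zero_or_pos r with h | h
    · exfalso; rw [h, Nat.mul_zero] at hr; omega
    · exact h
  have hM0 : 0 < M := by
    have h1 : (0 : ℤ) < (a : ℤ) := by exact_mod_cast ha
    have h2 : (0 : ℤ) < (r : ℤ) := by exact_mod_cast hr1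
    positivity
  have hMd' : (d' : ℤ) ∣ M := by
    refine ⟨q, ?_⟩
    have h1 : (a : ℤ) = (d : ℤ) * q := by exact_mod_cast hq
    have h2 : (d' : ℤ) = (d : ℤ) * r := by exact_mod_cast hr
    rw [hM, h1, h2]; ring
  set w : ℤ := v₀ % M with hw
  have hw0 : 0 ≤ w := Int.emod_nonneg _ hM0.ne'
  have hwM : w < M := Int.emod_lt_of_pos _ hM0
  have hkey : v₀ - M * (v₀ / M) = w := by rw [hw, Int.emod_def]
  by_cases hcase : 2 * w ≤ M
  · refine ⟨w, c₀ + (v₀ / M) * r, ?_, ?_, ?_⟩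
    · have : (c₀ + (v₀ / M) * r) * (a : ℤ) = c₀ * a + M * (v₀ / M) := by rw [hM]; ring
      rw [this]; omega
    · rw [← hkey]; exact dvd_sub hdvdv₀ (hMd'.mul_right _)
    · have habs : 2 * |w| ≤ M := by rw [abs_of_nonneg hw0]; omega
      have hMd : M * d = (a : ℤ) * d' := by
        have h2 : (d' : ℤ) = (d : ℤ) * r := by exact_mod_cast hr
        rw [hM, h2]; ring
      calc 2 * |w| * (d : ℤ) ≤ M * d :=
            mul_le_mul_of_nonneg_right habs (by positivity)
        _ = (a : ℤ) * d' := hMd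
  · refine ⟨w - M, c₀ + (v₀ / M + 1) * r, ?_, ?_, ?_⟩
    · have : (c₀ + (v₀ / M + 1) * r) * (a : ℤ) = c₀ * a + M * (v₀ / M) + M := by rw [hM]; ring
      rw [this]; omega
    · exact dvd_sub (by rw [← hkey]; exact dvd_sub hdvdv₀ (hMd'.mul_right _)) hMd'
    · have habs : 2 * |w - M| ≤ M := by rw [abs_of_nonpos (by omega)]; omega
      have hMd : M * d = (a : ℤ) * d' := by
        have h2 : (d' : ℤ) = (d : ℤ) * r := by exact_mod_cast hr
        rw [hM, h2]; ring
      calc 2 * |w - M| * (d : ℤ) ≤ M * d :=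
            mul_le_mul_of_nonneg_right habs (by positivity)
        _ = (a : ℤ) * d' := hMd

/-- The key inductive construction: coefficients bounded by `h/2` representing any
small multiple `m` of the gcd. -/
private lemma key (l : List ℕ) (hchain : l.Chain' (· > ·)) (hpos : ∀ x ∈ l, 0 < x)
    (h : ℕ) (hle : ∀ x ∈ l, x ≤ h) :
    ∀ m : ℤ, ((lgcd l : ℤ) ∣ m) → 2 * |m| ≤ (h : ℤ) * (lgcd l : ℤ) →
    ∃ c : ℕ → ℤ, (∀ x ∈ l, 2 * |c x| ≤ (h : ℤ)) ∧
      ((l.map (fun x => c x * (x : ℤ))).sum = m) := by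
  induction l with
  | nil =>
    intro m hdvd _
    refine ⟨fun _ => 0, by simp, ?_⟩
    simp only [lgcd, List.foldr_nil] at hdvd
    simp only [List.map_nil, List.sum_nil]
    have h0 : ((0:ℕ) : ℤ) ∣ m := by simpa [lgcd] using hdvd
    have : m = 0 := by simpa using zero_dvd_iff.mp (by simpa using h0)
    omega
  | cons a t ih =>
    intro m hdvd hbound
    have ha : 0 < a := hpos a (by simp)
    have hlgcd_cons : lgcd (a :: t) = Nat.gcd a (lgcd t) := rfl
    cases t with
    | nil =>
      -- single element: lgcd [a] = gcd a 0 = a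
      have hga : lgcd [a] = a := by simp [lgcd]
      rw [hga] at hdvd hbound
      refine ⟨fun x => if x = a then m / (a : ℤ) else 0, ?_, ?_⟩
      · intro x hx
        have hxa : x = a := by simpa using hx
        rw [hxa]
        simp only [if_pos rfl]
        have hmul : m / (a : ℤ) * a = m := Int.ediv_mul_cancel hdvd
        have ha' : (0 : ℤ) < a := by exact_mod_cast ha
        have : 2 * |m / (a : ℤ)| * a ≤ (h : ℤ) * a := by
          calc 2 * |m / (a : ℤ)| * a = 2 * |m / (a : ℤ) * a| := by
                rw [abs_mul, abs_of_pos ha']; ring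
            _ = 2 * |m| := by rw [hmul]
            _ ≤ (h : ℤ) * a := hbound
        exact le_of_mul_le_mul_right this ha'
      · simp only [List.map_cons, List.map_nil, List.sum_cons, List.sum_nil, if_pos rfl,
          add_zero]
        exact Int.ediv_mul_cancel hdvd
    | cons b t' =>
      set t : List ℕ := b :: t' with ht
      set d' : ℕ := lgcd t with hd'
      set d : ℕ := Nat.gcd a d' with hdd
      have hchain' : (a :: t).Chain' (· > ·) := hchain
      have hab : a > b := (List.isChain_cons_cons.mp hchain').1
      have hchaint : t.Chain' (· > ·) := (List.isChain_cons_cons.mp hchain').2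
      have hd'b : d' ∣ b := lgcd_dvd (by simp [ht])
      have hb : 0 < b := hpos b (by simp [ht])
      have hd'0 : 0 < d' := Nat.pos_of_dvd_of_pos hd'b hb
      have hd'a : d' < a := lt_of_le_of_lt (Nat.le_of_dvd hb hd'b) hab
      have hd0 : 0 < d := Nat.gcd_pos_of_pos_left _ ha
      obtain ⟨v, ca, hvca, hdv, hbv⟩ := near_mult a d' ha hd'0 m hdvd
      -- recursive call
      have hrec_bound : 2 * |v| ≤ (h : ℤ) * (d' : ℤ) := by
        have h1 : (a : ℤ) ≤ (h : ℤ) * d := by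
          have : a ≤ h * d := le_trans (hle a (by simp)) (Nat.le_mul_of_pos_right _ hd0)
          exact_mod_cast this
        have h2 : 2 * |v| * (d : ℤ) ≤ ((h : ℤ) * d') * d := by
          calc 2 * |v| * (d : ℤ) ≤ (a : ℤ) * d' := hbv
            _ ≤ ((h : ℤ) * d) * d' := by
                have : (0:ℤ) ≤ (d' : ℤ) := by positivity
                exact mul_le_mul_of_nonneg_right h1 this
            _ = ((h : ℤ) * d') * d := by ring
        have hd0' : (0 : ℤ) < (d : ℤ) := by exact_mod_cast hd0
        exact le_of_mul_le_mul_right h2 hd0'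
      obtain ⟨c, hcb, hcs⟩ := ih hchaint (fun x hx => hpos x (List.mem_cons_of_mem _ hx)) 
        (fun x hx => hle x (List.mem_cons_of_mem _ hx)) v hdv hrec_bound
      -- elements of t are all < a
      have hta : ∀ x ∈ t, x < a := by
        have hp : (a :: t).Pairwise (· > ·) :=
          (List.isChain_iff_pairwise).mp hchain'
        exact fun x hx => (List.pairwise_cons.mp hp).1 x hx
      refine ⟨fun x => if x = a then ca else c x, ?_, ?_⟩
      · intro x hx
        rcases List.mem_cons.mp hx with hxa | hx'
        · have hred : (fun x => if x = a then ca else c x) x = ca := by rw [hxa]; simp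
          rw [hred]
          -- the crucial bound on ca
          obtain ⟨q, hq⟩ : d ∣ a := Nat.gcd_dvd_left a d'
          obtain ⟨r, hr⟩ : d ∣ d' := Nat.gcd_dvd_right a d'
          have hq2 : 2 ≤ q := by
            rcases Nat.lt_or_ge q 2 with hlt | hge
            · interval_cases q
              · omega
              · exfalso
                rw [Nat.mul_one] at hq
                -- a = d ≤ d' < a
                have : d ∣ d' := Nat.gcd_dvd_right a d'
                have := Nat.le_of_dvd hd'0 this
                omega
            · exact hge
          have hrq : r < q := by
            -- d' < a : r*d < q*d
            have : r * d < q * d := by rw [Nat.mul_comm r d, Nat.mul_comm q d, ← hr, ← hq]; exact hd'a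
            exact Nat.lt_of_mul_lt_mul_right this
          have hqa : q ≤ a := by
            calc q ≤ d * q := Nat.le_mul_of_pos_left _ hd0
              _ = a := hq.symm
          have hqh : q ≤ h := le_trans hqa (hle a (by simp))
          -- nat inequality : h*d*d + a*d' ≤ h*(a*d)
          have hnat : h * d * d + a * d' ≤ h * (a * d) := by
            have h1 : h + q * r ≤ h * q := by
              calc h + q * r ≤ h + h * r := by
                    have := Nat.mul_le_mul_right r hqh
                    omega
                _ = h * (r + 1) := by ring
                _ ≤ h * q := Nat.mul_le_mul_left _ (by omega)
            calc h * d * d + a * d' = (h + q * r) * (d * d) := by rw [hq, hr]; ring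
              _ ≤ (h * q) * (d * d) := Nat.mul_le_mul_right _ h1
              _ = h * (a * d) := by rw [hq]; ring
          have hca : ca * (a : ℤ) = m - v := by linarith
          have hA : (0:ℤ) < (a : ℤ) * d := by
            have : 0 < a * d := Nat.mul_pos ha hd0
            exact_mod_cast this
          have hfinal : 2 * |ca| * ((a : ℤ) * d) ≤ (h : ℤ) * ((a:ℤ) * d) := by
            have e1 : 2 * |ca| * ((a : ℤ) * d) = 2 * |ca * (a:ℤ)| * d := by
              rw [abs_mul, abs_of_pos (by exact_mod_cast ha : (0:ℤ) < (a:ℤ))]; ring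
            rw [e1, hca]
            have hdn : (0:ℤ) ≤ (d:ℤ) := by positivity
            have e2 : 2 * |m - v| * (d:ℤ) ≤ 2 * |m| * d + 2 * |v| * d := by
              have habs : |m - v| ≤ |m| + |v| := abs_sub m v
              have h6 := mul_le_mul_of_nonneg_right habs hdn
              have h7 : (|m| + |v|) * (d:ℤ) = |m| * d + |v| * d := by ring
              rw [h7] at h6
              linarith
            have e3 : 2 * |m| * (d:ℤ) ≤ (h:ℤ) * d * d := by
              have hb' : 2 * |m| ≤ (h:ℤ) * d := by
                have : ((lgcd (a :: t) : ℕ) : ℤ) = (d : ℤ) := by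
                  exact_mod_cast congrArg (fun n : ℕ => (n : ℤ)) hlgcd_cons
                rw [← this]
                exact hbound
              have h8 := mul_le_mul_of_nonneg_right hb' hdn
              calc 2 * |m| * (d:ℤ) ≤ ((h:ℤ) * d) * d := h8
                _ = (h:ℤ) * d * d := by ring
            have e4 : 2 * |v| * (d:ℤ) ≤ (a:ℤ) * d' := hbv
            have e5 : (h:ℤ) * d * d + (a:ℤ) * d' ≤ (h:ℤ) * ((a:ℤ) * d) := by
              exact_mod_cast hnat
            linarith
          exact le_of_mul_le_mul_right hfinal hA
        · have hne : x ≠ a := Nat.ne_of_lt (hta x hx')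
          simp only [if_neg hne]
          exact hcb x hx'
      · simp only [List.map_cons, List.sum_cons]
        have hmapeq : (t.map (fun x => (if x = a then ca else c x) * (x : ℤ))) =
            (t.map (fun x => c x * (x : ℤ))) := by
          apply List.map_congr_left
          intro x hx
          rw [if_neg (Nat.ne_of_lt (hta x hx))]
        rw [hmapeq, hcs]
        simp only [if_true, ite_true, eq_self_iff_true]
        linarith

/-- Bézout-type bound of Majewski and Havas: for a nonempty finite set `S` of
positive integers with gcd `g` and maximum `H`, the gcd can be written as an
integer combination `Σ c_i·a_i = g` with `|c_i| ≤ max{H/(2g), 1}` for all `i`. -/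
theorem majewski_havas (S : Finset ℕ) (hS : S.Nonempty)
    (hpos : ∀ x ∈ S, 0 < x) (g H : ℕ)
    (hg : g = S.gcd id) (hH : H = S.max' hS) :
    ∃ c : ℕ → ℤ,
      (∀ a ∈ S, (|c a| : ℚ) ≤ max ((H : ℚ) / (2 * g)) 1) ∧
      ∑ a ∈ S, c a * (a : ℤ) = (g : ℤ) := by
  have hgdvd : ∀ a ∈ S, g ∣ a := fun a ha => hg ▸ Finset.gcd_dvd ha
  obtain ⟨a₀, ha₀⟩ := id hS
  have hg0 : 0 < g := by
    rcases Nat.eq_zero_or_pos g with h0 | h0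
    · exfalso
      have := hgdvd a₀ ha₀
      rw [h0] at this
      have := Nat.eq_zero_of_zero_dvd this
      exact (hpos a₀ ha₀).ne' this
    · exact h0
  have hHmem : H ∈ S := hH ▸ S.max'_mem hS
  have hle : ∀ a ∈ S, a ≤ H := fun a ha => hH ▸ S.le_max' a ha
  have hgH : g ∣ H := hgdvd H hHmem
  by_cases hcase : H < 2 * g
  · -- all elements equal g ; S = {g}
    have hall : ∀ a ∈ S, a = g := by
      intro a ha
      obtain ⟨k, hk⟩ := hgdvd a ha
      have h1 : 0 < k := by
        rcases Nat.eq_zero_or_pos k with h | h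
        · exfalso; rw [h, Nat.mul_zero] at hk; exact (hpos a ha).ne' hk
        · exact h
      have h2 : a ≤ H := hle a ha
      have h3 : k < 2 := by
        by_contra hc
        push_neg at hc
        have : 2 * g ≤ g * k := by
          calc 2 * g = g * 2 := by ring
            _ ≤ g * k := Nat.mul_le_mul_left _ hc
        omega
      have hk1 : k = 1 := by omega
      rw [hk1, Nat.mul_one] at hk
      omega
    have hSg : S = {g} := by
      apply Finset.eq_singleton_iff_unique_mem.mpr
      exact ⟨(hall a₀ ha₀) ▸ ha₀, hall⟩
    refine ⟨fun _ => 1, ?_, ?_⟩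
    · intro a ha
      simp only [abs_one]
      exact le_trans (by norm_num) (le_max_right _ _)
    · rw [hSg]
      simp
  · push_neg at hcase
    set T : Finset ℕ := S.image (fun a => a / g) with hT
    set h : ℕ := H / g with hh
    have hhg : h * g = H := Nat.div_mul_cancel hgH
    have h2h : 2 ≤ h := (Nat.le_div_iff_mul_le hg0).mpr (by omega)
    -- gcd of T is 1
    have hTg : T.gcd id = 1 := by
      have hga : ∀ a ∈ S, g * T.gcd id ∣ a := by
        intro a ha
        have hmem : a / g ∈ T := Finset.mem_image_of_mem _ ha
        have h1 : T.gcd id ∣ a / g := Finset.gcd_dvd hmem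
        have h2 : g * (a / g) = a := Nat.mul_div_cancel' (hgdvd a ha)
        calc g * T.gcd id ∣ g * (a / g) := Nat.mul_dvd_mul_left g h1
          _ = a := h2
      have hdvd : g * T.gcd id ∣ g := by
        have h5 : g * T.gcd id ∣ S.gcd id := Finset.dvd_gcd hga
        rwa [← hg] at h5
      have h3 : g * T.gcd id ∣ g * 1 := by rwa [Nat.mul_one]
      have h4 := (Nat.mul_dvd_mul_iff_left hg0).mp h3
      exact Nat.dvd_one.mp h4
    set l : List ℕ := (T.sort (· ≤ ·)).reverse with hl
    have hmeml : ∀ x, x ∈ l ↔ x ∈ T := by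
      intro x
      rw [hl, List.mem_reverse, Finset.mem_sort]
    have hchain : l.Chain' (· > ·) := by
      apply List.Pairwise.isChain
      rw [hl]
      rw [List.pairwise_reverse]
      exact (Finset.sortedLT_sort T).pairwise
    have hlpos : ∀ x ∈ l, 0 < x := by
      intro x hx
      obtain ⟨a, ha, rfl⟩ := Finset.mem_image.mp ((hmeml x).mp hx)
      exact Nat.div_pos (Nat.le_of_dvd (hpos a ha) (hgdvd a ha)) hg0
    have hlle : ∀ x ∈ l, x ≤ h := by
      intro x hx
      obtain ⟨a, ha, rfl⟩ := Finset.mem_image.mp ((hmeml x).mp hx)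
      exact Nat.div_le_div_right (hle a ha)
    have hlgcd : lgcd l = 1 := by
      have h1 : lgcd l ∣ 1 := by
        rw [← hTg]
        apply Finset.dvd_gcd
        intro x hx
        exact lgcd_dvd ((hmeml x).mpr hx)
      exact Nat.dvd_one.mp h1
    obtain ⟨c, hcb, hcs⟩ := key l hchain hlpos h hlle 1
      (by rw [hlgcd]; norm_num)
      (by rw [hlgcd]; simp only [abs_one, Nat.cast_one, mul_one]; exact_mod_cast h2h)
    refine ⟨fun a => c (a / g), ?_, ?_⟩
    · intro a ha
      have hmem : a / g ∈ l := (hmeml _).mpr (Finset.mem_image_of_mem _ ha)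
      have hb := hcb _ hmem
      -- 2 * |c (a/g)| ≤ h  ⇒  (|c (a/g)| : ℚ) ≤ H / (2g)
      have hq : (|c (a / g)| : ℚ) ≤ (h : ℚ) / 2 := by
        have : (2 : ℚ) * (|c (a / g)| : ℚ) ≤ (h : ℚ) := by exact_mod_cast hb
        linarith
      have heq : (H : ℚ) / (2 * g) = (h : ℚ) / 2 := by
        have hgq : (g : ℚ) ≠ 0 := by exact_mod_cast hg0.ne'
        rw [← hhg]
        push_cast
        field_simp
      rw [heq]
      exact le_trans hq (le_max_left _ _)
    · -- the sum
      have hstep : ∀ a ∈ S, c (a / g) * (a : ℤ) = (c (a / g) * ((a / g : ℕ) : ℤ)) * (g : ℤ) := by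
        intro a ha
        have : ((a / g : ℕ) : ℤ) * (g : ℤ) = (a : ℤ) := by
          exact_mod_cast congrArg (fun n : ℕ => (n : ℤ)) (Nat.div_mul_cancel (hgdvd a ha))
        rw [mul_assoc, this]
      rw [Finset.sum_congr rfl hstep, ← Finset.sum_mul]
      have hinj : ∀ x ∈ S, ∀ y ∈ S, x / g = y / g → x = y := by
        intro x hx y hy hxy
        have h1 : g * (x / g) = x := Nat.mul_div_cancel' (hgdvd x hx)
        have h2 : g * (y / g) = y := Nat.mul_div_cancel' (hgdvd y hy)
        rw [← h1, ← h2, hxy]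
      have himg : ∑ x ∈ T, c x * (x : ℤ) = ∑ a ∈ S, c (a / g) * ((a / g : ℕ) : ℤ) := by
        rw [hT]
        exact Finset.sum_image hinj
      rw [← himg]
      have hlist : ∑ x ∈ T, c x * (x : ℤ) = (l.map (fun x => c x * (x : ℤ))).sum := by
        rw [hl, List.map_reverse, List.sum_reverse]
        rw [← Finset.sum_map_toList]
        exact (List.Perm.sum_eq (List.Perm.map _ (Finset.sort_perm_toList T (· ≤ ·)))).symm
      rw [hlist, hcs]
      ring
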